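/- Let (V,d,b) be an acyclic information network, T ≥ 1, and let k, k̂ ∈ ℕ. Consider any run of the Standard Greedy Algorithm: starting from (A_0, Â_0) = (∅, ∅), at each step choose among all feasible single additions (adding one node w ∈ (V\{d}) \ (A_i ∪ Â_i) to A_i provided |A_i| < k, or to Â_i provided |Â_i| < k̂) one that maximizes the resulting value of σ̄, and stop when no feasible addition remains (after min(k + k̂, |V| − 1)-bounded steps), producing (A*, Â*). Then σ̄(A*, Â*) ≥ (1/2) · max{ σ̄(A, Â) : A, Â ⊆ V\{d} disjoint, |A| ≤ k, |Â| ≤ k̂ }. -/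

import Mathlib

set_option maxHeartbeats 1000000


open MeasureTheory

/-- An information network: a finite node set `V` with a distinguished void node `d`
and a row-stochastic weight matrix `b` with entries in `[0,1]` and `b d d = 1`. -/
structure InfoNetwork (V : Type*) [Fintype V] where
  d : V
  b : V → V → ℝ
  b_nonneg : ∀ v u, 0 ≤ b v u
  b_le_one : ∀ v u, b v u ≤ 1
  row_sum : ∀ v, ∑ u, b v u = 1
  void_loop : b d d = 1

/-- The uniform probability measure on the interval `(0,1)`. -/
noncomputable def unifMeasure : Measure ℝ := volume.restrict (Set.Ioo (0:ℝ) 1)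

/-- Product over `V` of uniform measures on `(0,1)`: the distribution of the thresholds. -/
noncomputable def thresholdMeasure (V : Type*) [Fintype V] : Measure (V → ℝ) :=
  Measure.pi fun _ : V => unifMeasure

namespace InfoNetwork

variable {V : Type*} [Fintype V]

/-- The set of active nodes at time `t` under the non-progressive linear threshold model,
with transient initial set `A`, permanent initial set `Ahat` and thresholds `θ`. -/
noncomputable def activeSet (N : InfoNetwork V) (A Ahat : Set V) (θ : V → ℝ) : ℕ → Set V
  | 0 => A ∪ Ahat
  | t+1 => Ahat ∪
      {v | v ∉ Ahat ∧ θ v ≤ ∑ u, (N.activeSet A Ahat θ t).indicator (N.b v) u}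

/-- `E[X^t_v(A,Ahat)]`: the probability (over the random thresholds) that `v` is active
at time `t`. -/
noncomputable def EX (N : InfoNetwork V) (A Ahat : Set V) (t : ℕ) (v : V) : ℝ :=
  (thresholdMeasure V {θ | v ∈ N.activeSet A Ahat θ t}).toReal

/-- The expected influence over the period `[1,T]`. -/
noncomputable def sigmaBar (N : InfoNetwork V) (T : ℕ) (A Ahat : Set V) : ℝ :=
  (1 / (T : ℝ)) * ∑ t ∈ Finset.Icc 1 T, ∑ v, N.EX A Ahat t v

/-- The edge relation of the directed graph on `V \ {d}`. -/
def edgeRel (N : InfoNetwork V) (v u : V) : Prop :=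
  v ≠ N.d ∧ u ≠ N.d ∧ 0 < N.b v u

/-- The network is acyclic if the directed graph on `V \ {d}` has no directed cycle. -/
def Acyclic (N : InfoNetwork V) : Prop :=
  ∀ v, ¬ Relation.TransGen N.edgeRel v v

end InfoNetwork


/- ======================  Auxiliary development  ====================== -/

open Classical

instance : IsProbabilityMeasure unifMeasure := by
  constructor
  rw [unifMeasure, Measure.restrict_apply MeasurableSet.univ, Set.univ_inter, Real.volume_Ioo]
  norm_num

instance thresholdMeasureProb (V : Type*) [Fintype V] : IsProbabilityMeasure (thresholdMeasure V) := by
  unfold thresholdMeasure; infer_instance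

lemma unifMeasure_Iic {c : ℝ} (h0 : 0 ≤ c) (h1 : c ≤ 1) :
    unifMeasure (Set.Iic c) = ENNReal.ofReal c := by
  rw [unifMeasure, Measure.restrict_apply measurableSet_Iic]
  apply le_antisymm
  · have h2 : volume (Set.Iic c ∩ Set.Ioo (0:ℝ) 1) ≤ volume (Set.Ioc 0 c) := by
      apply measure_mono
      rintro x ⟨hx1, hx2, _⟩
      exact ⟨hx2, hx1⟩
    rw [Real.volume_Ioc, sub_zero] at h2
    exact h2
  · have h2 : volume (Set.Ioo (0:ℝ) c) ≤ volume (Set.Iic c ∩ Set.Ioo (0:ℝ) 1) := by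
      apply measure_mono
      rintro x ⟨hx1, hx2⟩
      exact ⟨le_of_lt hx2, hx1, lt_of_lt_of_le hx2 h1⟩
    rw [Real.volume_Ioo, sub_zero] at h2
    exact h2

section Slice
variable {V : Type*} [Fintype V] (v : V)

instance uniqueEqSub : Unique {u : V // ¬ u ≠ v} where
  default := ⟨v, by simp⟩
  uniq := by rintro ⟨x, hx⟩; simp only [ne_eq, not_not] at hx; subst hx; rfl

lemma pi_single_apply (B : Set ({u : V // ¬ u ≠ v} → ℝ)) (hB : MeasurableSet B) :
    Measure.pi (fun _ : {u : V // ¬ u ≠ v} => unifMeasure) B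
      = unifMeasure {r : ℝ | (fun _ => r) ∈ B} := by
  have hmp := measurePreserving_funUnique (β := ℝ) unifMeasure ({u : V // ¬ u ≠ v})
  have hCm : MeasurableSet {r : ℝ | (fun _ : {u : V // ¬ u ≠ v} => r) ∈ B} := by
    have : {r : ℝ | (fun _ : {u : V // ¬ u ≠ v} => r) ∈ B}
        = (fun r : ℝ => (fun _ : {u : V // ¬ u ≠ v} => r)) ⁻¹' B := rfl
    rw [this]
    exact (measurable_pi_lambda _ fun _ => measurable_id) hB
  have hfe : ∀ f : {u : V // ¬ u ≠ v} → ℝ,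
      (fun _ : {u : V // ¬ u ≠ v} => f default) = f :=
    fun f => funext fun u => by rw [Unique.eq_default u]
  have hBeq : (⇑(MeasurableEquiv.funUnique {u : V // ¬ u ≠ v} ℝ))
      ⁻¹' {r : ℝ | (fun _ : {u : V // ¬ u ≠ v} => r) ∈ B} = B := by
    ext f
    constructor
    · intro hf
      have h2 : (fun _ : {u : V // ¬ u ≠ v} => f default) ∈ B := hf
      rwa [hfe f] at h2
    · intro hf
      show (fun _ : {u : V // ¬ u ≠ v} => f default) ∈ B
      rwa [hfe f]
  conv_rhs => rw [← hmp.map_eq]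
  rw [Measure.map_apply (MeasurableEquiv.funUnique _ _).measurable hCm, hBeq]
  convert rfl

noncomputable def sliceEquiv : (V → ℝ) ≃ᵐ ({u : V // u ≠ v} → ℝ) × ({u : V // ¬ u ≠ v} → ℝ) :=
  MeasurableEquiv.piEquivPiSubtypeProd (fun _ : V => ℝ) (fun u => u ≠ v)

noncomputable def restMeasure : Measure ({u : V // u ≠ v} → ℝ) :=
  Measure.pi fun _ => unifMeasure

lemma thresholdMeasure_slice (S : Set (V → ℝ)) (hS : MeasurableSet S) :
    thresholdMeasure V S = ∫⁻ x, Measure.pi (fun _ : {u : V // ¬ u ≠ v} => unifMeasure)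
        {y | (sliceEquiv v).symm (x, y) ∈ S} ∂(restMeasure v) := by
  unfold thresholdMeasure restMeasure sliceEquiv
  set e := MeasurableEquiv.piEquivPiSubtypeProd (fun _ : V => ℝ) (fun u : V => u ≠ v) with he
  have hmp := measurePreserving_piEquivPiSubtypeProd (fun _ : V => (unifMeasure))
      (fun u : V => u ≠ v)
  have hpre : MeasurableSet (⇑e.symm ⁻¹' S) := e.symm.measurable hS
  have key : (Measure.pi fun _ : V => unifMeasure) S
      = ((Measure.pi fun _ : {u : V // u ≠ v} => unifMeasure).prod
          (Measure.pi fun _ : {u : V // ¬ u ≠ v} => unifMeasure)) (⇑e.symm ⁻¹' S) := by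
    rw [← hmp.map_eq, Measure.map_apply e.measurable hpre]
    congr 1
    ext θ
    simp only [Set.mem_preimage, MeasurableEquiv.symm_apply_apply]
  rw [key, Measure.prod_apply hpre]
  convert rfl
  rfl

lemma sliceEquiv_symm_apply (x : {u : V // u ≠ v} → ℝ) (y : {u : V // ¬ u ≠ v} → ℝ) (w : V) :
    (sliceEquiv v).symm (x, y) w = if h : w ≠ v then x ⟨w, h⟩ else y ⟨w, h⟩ := by
  rfl

lemma measure_threshold_le (h : ({u : V // u ≠ v} → ℝ) → ℝ) (hm : Measurable h)
    (h0 : ∀ x, 0 ≤ h x) (h1 : ∀ x, h x ≤ 1) :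
    thresholdMeasure V {θ | θ v ≤ h (fun u => θ u.1)}
      = ∫⁻ x, ENNReal.ofReal (h x) ∂(restMeasure v) := by
  have hproj : Measurable (fun θ : V → ℝ => (fun u : {u : V // u ≠ v} => θ u.1)) :=
    measurable_pi_lambda _ fun u => measurable_pi_apply _
  have hS : MeasurableSet {θ : V → ℝ | θ v ≤ h (fun u => θ u.1)} :=
    measurableSet_le (measurable_pi_apply v) (hm.comp hproj)
  rw [thresholdMeasure_slice v _ hS]
  apply lintegral_congr
  intro x
  have hset : {y : {u : V // ¬ u ≠ v} → ℝ | (sliceEquiv v).symm (x, y) ∈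
      {θ : V → ℝ | θ v ≤ h (fun u => θ u.1)}}
      = {y : {u : V // ¬ u ≠ v} → ℝ | y ⟨v, by simp⟩ ≤ h x} := by
    ext y
    simp only [Set.mem_setOf_eq, sliceEquiv_symm_apply]
    have e1 : (if h : v ≠ v then x ⟨v, h⟩ else y ⟨v, h⟩) = y ⟨v, by simp⟩ := by
      rw [dif_neg (by simp)]
    have e2 : (fun u : {u : V // u ≠ v} =>
        if h : (u:V) ≠ v then x ⟨u, h⟩ else y ⟨u, h⟩) = x := by
      funext u
      rw [dif_pos u.2]
    rw [e1, e2]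
  rw [hset]
  rw [pi_single_apply v _ (measurableSet_le (measurable_pi_apply _) measurable_const)]
  have hfin : {r : ℝ | (fun _ : {u : V // ¬ u ≠ v} => r) ∈
      {y : {u : V // ¬ u ≠ v} → ℝ | y ⟨v, by simp⟩ ≤ h x}} = Set.Iic (h x) := by
    ext r
    simp only [Set.mem_setOf_eq, Set.mem_Iic]
  rw [hfin, unifMeasure_Iic (h0 x) (h1 x)]

lemma measure_threshold_cylinder (B : Set ({u : V // u ≠ v} → ℝ)) (hB : MeasurableSet B) :
    thresholdMeasure V {θ | (fun u : {u : V // u ≠ v} => θ u.1) ∈ B} = restMeasure v B := by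
  have hproj : Measurable (fun θ : V → ℝ => (fun u : {u : V // u ≠ v} => θ u.1)) :=
    measurable_pi_lambda _ fun u => measurable_pi_apply _
  have hS : MeasurableSet {θ : V → ℝ | (fun u : {u : V // u ≠ v} => θ u.1) ∈ B} := hproj hB
  rw [thresholdMeasure_slice v _ hS]
  have hptwise : ∀ x : {u : V // u ≠ v} → ℝ,
      Measure.pi (fun _ : {u : V // ¬ u ≠ v} => unifMeasure)
        {y | (sliceEquiv v).symm (x, y) ∈
          {θ : V → ℝ | (fun u : {u : V // u ≠ v} => θ u.1) ∈ B}}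
      = B.indicator (fun _ => 1) x := by
    intro x
    have e2 : ∀ y : {u : V // ¬ u ≠ v} → ℝ, (fun u : {u : V // u ≠ v} =>
        (sliceEquiv v).symm (x, y) u.1) = x := by
      intro y
      funext u
      rw [sliceEquiv_symm_apply, dif_pos u.2]
    by_cases hx : x ∈ B
    · have he : {y : {u : V // ¬ u ≠ v} → ℝ | (sliceEquiv v).symm (x, y) ∈
          {θ : V → ℝ | (fun u : {u : V // u ≠ v} => θ u.1) ∈ B}} = Set.univ := by
        ext y
        simp only [Set.mem_setOf_eq, Set.mem_univ, iff_true, e2 y]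
        exact hx
      rw [he, Set.indicator_of_mem hx]
      simp
    · have he : {y : {u : V // ¬ u ≠ v} → ℝ | (sliceEquiv v).symm (x, y) ∈
          {θ : V → ℝ | (fun u : {u : V // u ≠ v} => θ u.1) ∈ B}} = ∅ := by
        ext y
        simp only [Set.mem_setOf_eq, Set.mem_empty_iff_false, iff_false, e2 y]
        exact hx
      rw [he, Set.indicator_of_notMem hx]
      simp
  rw [lintegral_congr hptwise, lintegral_indicator_const hB, one_mul]

end Slice

namespace InfoNetwork
variable {V : Type*} [Fintype V]

open Classical in
noncomputable def walkP (N : InfoNetwork V) (A Ahat : Set V) : ℕ → V → ℝ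
  | 0, v => if v ∈ Ahat then 1 else if v ∈ A then 1 else 0
  | t+1, v => if v ∈ Ahat then 1 else ∑ u, N.b v u * N.walkP A Ahat t u

variable (N : InfoNetwork V)

lemma walkP_nonneg (A Ahat : Set V) : ∀ t v, 0 ≤ N.walkP A Ahat t v := by
  intro t
  induction t with
  | zero => intro v; simp only [walkP]; split <;> [norm_num; skip]; split <;> norm_num
  | succ t ih =>
    intro v; simp only [walkP]; split
    · norm_num
    · exact Finset.sum_nonneg fun u _ => mul_nonneg (N.b_nonneg v u) (ih u)

lemma walkP_le_one (A Ahat : Set V) : ∀ t v, N.walkP A Ahat t v ≤ 1 := by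
  intro t
  induction t with
  | zero => intro v; simp only [walkP]; split <;> [norm_num; skip]; split <;> norm_num
  | succ t ih =>
    intro v; simp only [walkP]; split
    · norm_num
    · calc ∑ u, N.b v u * N.walkP A Ahat t u ≤ ∑ u, N.b v u := by
            refine Finset.sum_le_sum fun u _ => ?_
            calc N.b v u * N.walkP A Ahat t u ≤ N.b v u * 1 :=
                  mul_le_mul_of_nonneg_left (ih u) (N.b_nonneg v u)
              _ = N.b v u := mul_one _
        _ = 1 := N.row_sum v

lemma walkP_mono {A B Ahat Bhat : Set V} (hA : A ⊆ B) (hAh : Ahat ⊆ Bhat) :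
    ∀ t v, N.walkP A Ahat t v ≤ N.walkP B Bhat t v := by
  intro t
  induction t with
  | zero =>
    intro v; simp only [walkP]
    split
    · rename_i h; rw [if_pos (hAh h)]
    · split
      · rename_i h; split; · norm_num
        rw [if_pos (hA h)]
      · split <;> [norm_num; skip]; split <;> norm_num
  | succ t ih =>
    intro v; simp only [walkP]
    split
    · rename_i h; rw [if_pos (hAh h)]
    · split
      · rename_i h _
        have h1 := N.walkP_le_one A Ahat (t+1) v
        simp only [walkP, if_neg h] at h1
        exact h1
      · exact Finset.sum_le_sum fun u _ =>
          mul_le_mul_of_nonneg_left (ih u) (N.b_nonneg v u)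


lemma walkP_mem_hat {A Ahat : Set V} {v : V} (h : v ∈ Ahat) (t : ℕ) :
    N.walkP A Ahat t v = 1 := by
  cases t <;> simp [walkP, h]

lemma walkP_not_mem_hat {A Ahat : Set V} {v : V} (h : v ∉ Ahat) (t : ℕ) :
    N.walkP A Ahat (t+1) v = ∑ u, N.b v u * N.walkP A Ahat t u := by
  simp [walkP, h]

open Classical in
lemma walkP_zero_not_mem_hat {A Ahat : Set V} {v : V} (h : v ∉ Ahat) :
    N.walkP A Ahat 0 v = if v ∈ A then 1 else 0 := by
  simp [walkP, h]


lemma walkP_submod_T {A B Ahat Bhat : Set V} (hA : A ⊆ B) (hAh : Ahat ⊆ Bhat) (w : V) :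
    ∀ t v, N.walkP (insert w B) Bhat t v - N.walkP B Bhat t v ≤
      N.walkP (insert w A) Ahat t v - N.walkP A Ahat t v := by
  intro t
  induction t with
  | zero =>
    intro v
    by_cases hv : v ∈ Bhat
    · rw [N.walkP_mem_hat hv, N.walkP_mem_hat hv, sub_self]
      exact sub_nonneg.2 (N.walkP_mono (Set.subset_insert w A) (le_refl Ahat) 0 v)
    · have hva : v ∉ Ahat := fun h => hv (hAh h)
      rw [N.walkP_zero_not_mem_hat hv, N.walkP_zero_not_mem_hat hv,
        N.walkP_zero_not_mem_hat hva, N.walkP_zero_not_mem_hat hva]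
      by_cases hw : v = w
      · subst hw
        simp only [Set.mem_insert_iff, true_or, if_pos]
        by_cases hvB : v ∈ B
        · have hvA' : (if v ∈ A then (1:ℝ) else 0) ≤ 1 := by split <;> norm_num
          rw [if_pos hvB]; linarith
        · have hvA : v ∉ A := fun h => hvB (hA h)
          rw [if_neg hvB, if_neg hvA]
      · simp only [Set.mem_insert_iff, hw, false_or]
        simp
    | succ t ih =>
      intro v
      by_cases hv : v ∈ Bhat
      · rw [N.walkP_mem_hat hv, N.walkP_mem_hat hv, sub_self]
        exact sub_nonneg.2 (N.walkP_mono (Set.subset_insert w A) (le_refl Ahat) _ v)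
      · have hva : v ∉ Ahat := fun h => hv (hAh h)
        rw [N.walkP_not_mem_hat hv, N.walkP_not_mem_hat hv,
          N.walkP_not_mem_hat hva, N.walkP_not_mem_hat hva,
          ← Finset.sum_sub_distrib, ← Finset.sum_sub_distrib]
        refine Finset.sum_le_sum fun u _ => ?_
        rw [← mul_sub, ← mul_sub]
        exact mul_le_mul_of_nonneg_left (ih u) (N.b_nonneg v u)

lemma walkP_submod_P {A B Ahat Bhat : Set V} (hA : A ⊆ B) (hAh : Ahat ⊆ Bhat) (w : V) :
    ∀ t v, N.walkP B (insert w Bhat) t v - N.walkP B Bhat t v ≤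
      N.walkP A (insert w Ahat) t v - N.walkP A Ahat t v := by
  intro t
  induction t with
  | zero =>
    intro v
    by_cases hv : v ∈ Bhat
    · rw [N.walkP_mem_hat hv, N.walkP_mem_hat (Set.mem_insert_of_mem w hv), sub_self]
      exact sub_nonneg.2 (N.walkP_mono (le_refl A) (Set.subset_insert w Ahat) 0 v)
    · have hva : v ∉ Ahat := fun h => hv (hAh h)
      by_cases hw : v = w
      · subst hw
        rw [N.walkP_mem_hat (Set.mem_insert v Bhat), N.walkP_mem_hat (Set.mem_insert v Ahat)]
        have := N.walkP_mono hA hAh 0 v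
        linarith
      · have hv' : v ∉ insert w Bhat := by simp [hw, hv]
        have hva' : v ∉ insert w Ahat := by simp [hw, hva]
        rw [N.walkP_zero_not_mem_hat hv', N.walkP_zero_not_mem_hat hv,
          N.walkP_zero_not_mem_hat hva', N.walkP_zero_not_mem_hat hva]
        simp
  | succ t ih =>
    intro v
    by_cases hv : v ∈ Bhat
    · rw [N.walkP_mem_hat hv, N.walkP_mem_hat (Set.mem_insert_of_mem w hv), sub_self]
      exact sub_nonneg.2 (N.walkP_mono (le_refl A) (Set.subset_insert w Ahat) _ v)
    · have hva : v ∉ Ahat := fun h => hv (hAh h)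
      by_cases hw : v = w
      · subst hw
        rw [N.walkP_mem_hat (Set.mem_insert v Bhat), N.walkP_mem_hat (Set.mem_insert v Ahat)]
        have := N.walkP_mono hA hAh (t+1) v
        linarith
      · have hv' : v ∉ insert w Bhat := by simp [hw, hv]
        have hva' : v ∉ insert w Ahat := by simp [hw, hva]
        rw [N.walkP_not_mem_hat hv', N.walkP_not_mem_hat hv,
          N.walkP_not_mem_hat hva', N.walkP_not_mem_hat hva,
          ← Finset.sum_sub_distrib, ← Finset.sum_sub_distrib]
        refine Finset.sum_le_sum fun u _ => ?_
        rw [← mul_sub, ← mul_sub]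
        exact mul_le_mul_of_nonneg_left (ih u) (N.b_nonneg v u)

lemma walkP_dominance (A Ahat : Set V) (w : V) :
    ∀ t v, N.walkP (insert w A) Ahat t v ≤ N.walkP A (insert w Ahat) t v := by
  intro t
  induction t with
  | zero =>
    intro v
    by_cases hv : v ∈ Ahat
    · rw [N.walkP_mem_hat hv, N.walkP_mem_hat (Set.mem_insert_of_mem w hv)]
    · by_cases hw : v = w
      · subst hw
        rw [N.walkP_mem_hat (Set.mem_insert v Ahat)]
        exact N.walkP_le_one _ _ 0 v
      · have hv' : v ∉ insert w Ahat := by simp [hw, hv]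
        rw [N.walkP_zero_not_mem_hat hv, N.walkP_zero_not_mem_hat hv']
        simp [Set.mem_insert_iff, hw]
  | succ t ih =>
    intro v
    by_cases hv : v ∈ Ahat
    · rw [N.walkP_mem_hat hv, N.walkP_mem_hat (Set.mem_insert_of_mem w hv)]
    · by_cases hw : v = w
      · subst hw
        rw [N.walkP_mem_hat (Set.mem_insert v Ahat)]
        exact N.walkP_le_one _ _ _ v
      · have hv' : v ∉ insert w Ahat := by simp [hw, hv]
        rw [N.walkP_not_mem_hat hv, N.walkP_not_mem_hat hv']
        exact Finset.sum_le_sum fun u _ =>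
          mul_le_mul_of_nonneg_left (ih u) (N.b_nonneg v u)

lemma walkP_irrel {Ahat : Set V} {w : V} (hw : w ∈ Ahat) (A : Set V) :
    ∀ t v, N.walkP (insert w A) Ahat t v = N.walkP A Ahat t v := by
  intro t
  induction t with
  | zero =>
    intro v
    by_cases hv : v ∈ Ahat
    · rw [N.walkP_mem_hat hv, N.walkP_mem_hat hv]
    · have hvw : v ≠ w := fun h => hv (h ▸ hw)
      rw [N.walkP_zero_not_mem_hat hv, N.walkP_zero_not_mem_hat hv]
      simp [Set.mem_insert_iff, hvw]
  | succ t ih =>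
    intro v
    by_cases hv : v ∈ Ahat
    · rw [N.walkP_mem_hat hv, N.walkP_mem_hat hv]
    · rw [N.walkP_not_mem_hat hv, N.walkP_not_mem_hat hv]
      exact Finset.sum_congr rfl fun u _ => by rw [ih u]


/-- off-diagonal weights from the void node vanish -/
lemma b_d_eq_zero {u : V} (hu : u ≠ N.d) : N.b N.d u = 0 := by
  have hs := N.row_sum N.d
  have he : ∑ x ∈ Finset.univ.erase N.d, N.b N.d x + N.b N.d N.d = ∑ x, N.b N.d x :=
    Finset.sum_erase_add _ _ (Finset.mem_univ N.d)
  rw [hs, N.void_loop] at he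
  have hz : ∑ x ∈ Finset.univ.erase N.d, N.b N.d x = 0 := by linarith
  have := (Finset.sum_eq_zero_iff_of_nonneg
    (fun x _ => N.b_nonneg N.d x)).1 hz u (Finset.mem_erase.2 ⟨hu, Finset.mem_univ u⟩)
  exact this

lemma no_transGen_from_d (x : V) : ¬ Relation.TransGen N.edgeRel N.d x := by
  intro h
  induction h with
  | single h => exact h.1 rfl
  | tail _ _ ih => exact ih

/-- the set of coordinates on which membership of `u` can depend -/
def descD (N : InfoNetwork V) (u : V) : Set V :=
  {w | w = u ∨ w = N.d ∨ Relation.TransGen N.edgeRel u w}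

lemma not_mem_descD (hacyc : N.Acyclic) {v u : V} (hv : v ≠ N.d) (hb : 0 < N.b v u) :
    v ∉ N.descD u := by
  rintro (rfl | rfl | htg)
  · by_cases hu : v = N.d
    · exact hv hu
    · exact hacyc v (Relation.TransGen.single ⟨hv, hu, hb⟩)
  · exact hv rfl
  · by_cases hu : u = N.d
    · subst hu; exact N.no_transGen_from_d v htg
    · exact hacyc v (Relation.TransGen.head ⟨hv, hu, hb⟩ htg)

lemma activeSet_determined (A Ahat : Set V) : ∀ (t : ℕ) (u : V) (θ θ' : V → ℝ),
    (∀ w ∈ N.descD u, θ w = θ' w) →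
    (u ∈ N.activeSet A Ahat θ t ↔ u ∈ N.activeSet A Ahat θ' t) := by
  intro t
  induction t with
  | zero => intro u θ θ' _; simp [activeSet]
  | succ t ih =>
    intro u θ θ' hag
    by_cases hu : u ∈ Ahat
    · simp [activeSet, hu]
    · have hθu : θ u = θ' u := hag u (Or.inl rfl)
      have hsum : ∑ w, (N.activeSet A Ahat θ t).indicator (N.b u) w
          = ∑ w, (N.activeSet A Ahat θ' t).indicator (N.b u) w := by
        refine Finset.sum_congr rfl fun w _ => ?_
        by_cases hbw : N.b u w = 0
        · simp [Set.indicator_apply, hbw]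
        · have hbpos : 0 < N.b u w := lt_of_le_of_ne (N.b_nonneg u w) (Ne.symm hbw)
          by_cases hwd : w = N.d
          · subst hwd
            have hiff : N.d ∈ N.activeSet A Ahat θ t ↔ N.d ∈ N.activeSet A Ahat θ' t := by
              refine ih N.d θ θ' ?_
              rintro x (rfl | rfl | htg)
              · exact hag _ (Or.inr (Or.inl rfl))
              · exact hag _ (Or.inr (Or.inl rfl))
              · exact absurd htg (N.no_transGen_from_d x)
            simp [Set.indicator_apply, hiff]
          · have hud : u ≠ N.d := by
              intro h; subst h; exact hbw (N.b_d_eq_zero hwd)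
            have hedge : N.edgeRel u w := ⟨hud, hwd, hbpos⟩
            have hiff : w ∈ N.activeSet A Ahat θ t ↔ w ∈ N.activeSet A Ahat θ' t := by
              refine ih w θ θ' ?_
              rintro x (rfl | rfl | htg)
              · exact hag _ (Or.inr (Or.inr (Relation.TransGen.single hedge)))
              · exact hag _ (Or.inr (Or.inl rfl))
              · exact hag _ (Or.inr (Or.inr (Relation.TransGen.head hedge htg)))
            simp [Set.indicator_apply, hiff]
      constructor
      · rintro (h | ⟨h1, h2⟩)
        · exact absurd h hu
        · exact Or.inr ⟨h1, by rw [← hθu, ← hsum]; exact h2⟩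
      · rintro (h | ⟨h1, h2⟩)
        · exact absurd h hu
        · exact Or.inr ⟨h1, by rw [hθu, hsum]; exact h2⟩

lemma measurableSet_activeSet (A Ahat : Set V) : ∀ (t : ℕ) (u : V),
    MeasurableSet {θ : V → ℝ | u ∈ N.activeSet A Ahat θ t} := by
  intro t
  induction t with
  | zero =>
    intro u
    by_cases h : u ∈ A ∪ Ahat
    · have : {θ : V → ℝ | u ∈ N.activeSet A Ahat θ 0} = Set.univ := by
        ext θ
        simp only [Set.mem_setOf_eq, Set.mem_univ, iff_true]
        exact h
      rw [this]; exact MeasurableSet.univ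
    · have : {θ : V → ℝ | u ∈ N.activeSet A Ahat θ 0} = ∅ := by
        ext θ
        simp only [Set.mem_setOf_eq, Set.mem_empty_iff_false, iff_false]
        intro hc
        exact h hc
      rw [this]; exact MeasurableSet.empty
  | succ t ih =>
    intro u
    by_cases hu : u ∈ Ahat
    · have : {θ : V → ℝ | u ∈ N.activeSet A Ahat θ (t+1)} = Set.univ := by
        ext θ; simp [activeSet, hu]
      rw [this]; exact MeasurableSet.univ
    · have hset : {θ : V → ℝ | u ∈ N.activeSet A Ahat θ (t+1)}
          = {θ : V → ℝ | θ u ≤ ∑ w, (N.activeSet A Ahat θ t).indicator (N.b u) w} := by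
        ext θ; simp [activeSet, hu]
      rw [hset]
      apply measurableSet_le (measurable_pi_apply u)
      apply Finset.measurable_sum
      intro w _
      have : (fun θ : V → ℝ => (N.activeSet A Ahat θ t).indicator (N.b u) w)
          = ({θ : V → ℝ | w ∈ N.activeSet A Ahat θ t}).indicator (fun _ => N.b u w) := by
        funext θ
        by_cases hw : w ∈ N.activeSet A Ahat θ t <;>
          simp [Set.indicator_apply, hw]
      rw [this]
      exact Measurable.indicator measurable_const (ih w)


lemma walkP_d_eq_zero {A Ahat : Set V} (hdA : N.d ∉ A) (hdAh : N.d ∉ Ahat) :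
    ∀ t, N.walkP A Ahat t N.d = 0 := by
  intro t
  induction t with
  | zero => rw [N.walkP_zero_not_mem_hat hdAh, if_neg hdA]
  | succ t ih =>
    rw [N.walkP_not_mem_hat hdAh]
    rw [Finset.sum_eq_single_of_mem N.d (Finset.mem_univ N.d)
      (fun w _ hw => by rw [N.b_d_eq_zero hw, zero_mul])]
    rw [N.void_loop, one_mul, ih]

/-- extension of a `rest` vector by `0` at coordinate `v` -/
noncomputable def extFun (v : V) (x : {u : V // u ≠ v} → ℝ) : V → ℝ :=
  fun w => if hw : w ≠ v then x ⟨w, hw⟩ else 0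

lemma measurable_extFun (v : V) : Measurable (extFun (V := V) v) := by
  apply measurable_pi_lambda
  intro w
  by_cases hw : w ≠ v
  · simp only [extFun, dif_pos hw]
    exact measurable_pi_apply _
  · simp only [extFun, dif_neg hw]
    exact measurable_const

lemma extFun_agree (v : V) (θ : V → ℝ) {w : V} (hw : w ≠ v) :
    extFun v (fun u : {u : V // u ≠ v} => θ u.1) w = θ w := by
  simp only [extFun, dif_pos hw]

lemma measure_activeSet_d (A Ahat : Set V) (hdA : N.d ∉ A) (hdAh : N.d ∉ Ahat) :
    ∀ t, thresholdMeasure V {θ | N.d ∈ N.activeSet A Ahat θ t} = 0 := by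
  intro t
  induction t with
  | zero =>
    have he : {θ : V → ℝ | N.d ∈ N.activeSet A Ahat θ 0} = ∅ := by
      ext θ
      simp only [Set.mem_setOf_eq, Set.mem_empty_iff_false, iff_false]
      rintro (h | h)
      · exact hdA h
      · exact hdAh h
    rw [he]
    exact measure_empty (μ := thresholdMeasure V)
  | succ t ih =>
    have hzero : thresholdMeasure V {θ : V → ℝ | θ N.d ≤ (0:ℝ)} = 0 := by
      have h := measure_threshold_le N.d (fun _ => (0:ℝ)) measurable_const
        (fun _ => le_refl 0) (fun _ => zero_le_one)
      simpa using h
    have hsub : {θ : V → ℝ | N.d ∈ N.activeSet A Ahat θ (t+1)}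
        ⊆ {θ : V → ℝ | θ N.d ≤ (0:ℝ)} ∪ {θ : V → ℝ | N.d ∈ N.activeSet A Ahat θ t} := by
      rintro θ (h | ⟨_, hle⟩)
      · exact absurd h hdAh
      · have hsum : ∑ u, (N.activeSet A Ahat θ t).indicator (N.b N.d) u
            = if N.d ∈ N.activeSet A Ahat θ t then 1 else 0 := by
          rw [Finset.sum_eq_single_of_mem N.d (Finset.mem_univ N.d)
            (fun w _ hw => by simp [Set.indicator_apply, N.b_d_eq_zero hw])]
          by_cases hd : N.d ∈ N.activeSet A Ahat θ t <;>
            simp [Set.indicator_apply, hd, N.void_loop]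
        rw [hsum] at hle
        by_cases hd : N.d ∈ N.activeSet A Ahat θ t
        · exact Or.inr hd
        · rw [if_neg hd] at hle
          exact Or.inl hle
    have hmono := measure_mono (μ := thresholdMeasure V) hsub
    have hle2 := le_trans hmono (measure_union_le _ _)
    rw [hzero, ih, add_zero] at hle2
    exact le_antisymm hle2 (zero_le)

theorem measure_activeSet_eq (hacyc : N.Acyclic) (A Ahat : Set V)
    (hA : A ⊆ {x | x ≠ N.d}) (hAh : Ahat ⊆ {x | x ≠ N.d}) :
    ∀ (t : ℕ) (v : V), thresholdMeasure V {θ | v ∈ N.activeSet A Ahat θ t}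
      = ENNReal.ofReal (N.walkP A Ahat t v) := by
  have hdA : N.d ∉ A := fun h => (hA h) rfl
  have hdAh : N.d ∉ Ahat := fun h => (hAh h) rfl
  intro t
  induction t with
  | zero =>
    intro v
    by_cases h : v ∈ A ∪ Ahat
    · have he : {θ : V → ℝ | v ∈ N.activeSet A Ahat θ 0} = Set.univ := by
        ext θ
        simp only [Set.mem_setOf_eq, Set.mem_univ, iff_true]
        exact h
      rw [he, measure_univ]
      rcases h with h | h
      · by_cases hvh : v ∈ Ahat
        · rw [N.walkP_mem_hat hvh]; norm_num
        · rw [N.walkP_zero_not_mem_hat hvh, if_pos h]; norm_num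
      · rw [N.walkP_mem_hat h]; norm_num
    · have he : {θ : V → ℝ | v ∈ N.activeSet A Ahat θ 0} = ∅ := by
        ext θ
        simp only [Set.mem_setOf_eq, Set.mem_empty_iff_false, iff_false]
        intro hc
        exact h hc
      have hvA : v ∉ A := fun hc => h (Or.inl hc)
      have hvh : v ∉ Ahat := fun hc => h (Or.inr hc)
      rw [he, measure_empty, N.walkP_zero_not_mem_hat hvh, if_neg hvA]
      norm_num
  | succ t ih =>
    intro v
    by_cases hvh : v ∈ Ahat
    · have he : {θ : V → ℝ | v ∈ N.activeSet A Ahat θ (t+1)} = Set.univ := by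
        ext θ; simp [activeSet, hvh]
      rw [he, measure_univ, N.walkP_mem_hat hvh]
      norm_num
    · by_cases hvd : v = N.d
      · subst hvd
        rw [N.measure_activeSet_d A Ahat hdA hdAh (t+1), N.walkP_d_eq_zero hdA hdAh (t+1)]
        norm_num
      · -- main case
        set h : ({u : V // u ≠ v} → ℝ) → ℝ :=
          fun x => ∑ u, (N.activeSet A Ahat (extFun v x) t).indicator (N.b v) u with hdef
        have hterm : ∀ (u : V), (fun x : {u : V // u ≠ v} → ℝ =>
            (N.activeSet A Ahat (extFun v x) t).indicator (N.b v) u)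
            = (extFun v ⁻¹' {θ : V → ℝ | u ∈ N.activeSet A Ahat θ t}).indicator
              (fun _ => N.b v u) := by
          intro u
          funext x
          by_cases hu : u ∈ N.activeSet A Ahat (extFun v x) t <;>
            simp [Set.indicator_apply, hu, Set.mem_preimage]
        have hBm : ∀ u : V, MeasurableSet
            (extFun v ⁻¹' {θ : V → ℝ | u ∈ N.activeSet A Ahat θ t}) :=
          fun u => (measurable_extFun v) (N.measurableSet_activeSet A Ahat t u)
        have hm : Measurable h := by
          rw [hdef]
          apply Finset.measurable_sum
          intro u _
          rw [hterm u]
          exact Measurable.indicator measurable_const (hBm u)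
        have h0 : ∀ x, 0 ≤ h x := by
          intro x
          exact Finset.sum_nonneg fun u _ => Set.indicator_apply_nonneg fun _ => N.b_nonneg v u
        have h1 : ∀ x, h x ≤ 1 := by
          intro x
          show ∑ u, (N.activeSet A Ahat (extFun v x) t).indicator (N.b v) u ≤ 1
          have hle : ∑ u, (N.activeSet A Ahat (extFun v x) t).indicator (N.b v) u
              ≤ ∑ u, N.b v u := by
            refine Finset.sum_le_sum fun u _ => ?_
            by_cases hu : u ∈ N.activeSet A Ahat (extFun v x) t <;>
              simp [Set.indicator_apply, hu, N.b_nonneg v u]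
          rw [N.row_sum v] at hle
          exact hle
        -- agreement of coordinates relevant to u with positive weight
        have hagree : ∀ (u : V), 0 < N.b v u → ∀ θ : V → ℝ, ∀ w ∈ N.descD u,
            extFun v (fun p : {p : V // p ≠ v} => θ p.1) w = θ w := by
          intro u hb θ w hw
          have hwv : w ≠ v := by
            intro hc; subst hc
            exact (N.not_mem_descD hacyc hvd hb) hw
          exact extFun_agree v θ hwv
        have hE : {θ : V → ℝ | v ∈ N.activeSet A Ahat θ (t+1)}
            = {θ : V → ℝ | θ v ≤ h (fun u : {u : V // u ≠ v} => θ u.1)} := by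
          ext θ
          have hmem : v ∈ N.activeSet A Ahat θ (t+1)
              ↔ θ v ≤ ∑ u, (N.activeSet A Ahat θ t).indicator (N.b v) u := by
            simp [activeSet, hvh]
          rw [Set.mem_setOf_eq, hmem, Set.mem_setOf_eq]
          have hsums : ∑ u, (N.activeSet A Ahat θ t).indicator (N.b v) u
              = ∑ u, (N.activeSet A Ahat
                  (extFun v (fun p : {p : V // p ≠ v} => θ p.1)) t).indicator (N.b v) u := by
            refine Finset.sum_congr rfl fun u _ => ?_
            by_cases hbu : N.b v u = 0
            · simp [Set.indicator_apply, hbu]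
            · have hbpos : 0 < N.b v u := lt_of_le_of_ne (N.b_nonneg v u) (Ne.symm hbu)
              have hiff := N.activeSet_determined A Ahat t u
                (extFun v (fun p : {p : V // p ≠ v} => θ p.1)) θ (hagree u hbpos θ)
              by_cases hu : u ∈ N.activeSet A Ahat θ t
              · rw [Set.indicator_of_mem hu, Set.indicator_of_mem (hiff.2 hu)]
              · rw [Set.indicator_of_notMem hu, Set.indicator_of_notMem (fun hc => hu (hiff.1 hc))]
          have hh : h (fun u : {u : V // u ≠ v} => θ u.1)
              = ∑ u, (N.activeSet A Ahat
                (extFun v (fun p : {p : V // p ≠ v} => θ p.1)) t).indicator (N.b v) u := rfl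
          rw [hh, ← hsums]
        rw [hE, measure_threshold_le v h hm h0 h1]
        have hint : ∀ u : V, ∫⁻ x, ENNReal.ofReal
            ((N.activeSet A Ahat (extFun v x) t).indicator (N.b v) u) ∂(restMeasure v)
            = ENNReal.ofReal (N.b v u * N.walkP A Ahat t u) := by
          intro u
          by_cases hbu : N.b v u = 0
          · have : ∀ x : {p : V // p ≠ v} → ℝ,
                ENNReal.ofReal ((N.activeSet A Ahat (extFun v x) t).indicator (N.b v) u) = 0 := by
              intro x
              by_cases hu : u ∈ N.activeSet A Ahat (extFun v x) t <;>
                simp [Set.indicator_apply, hu, hbu]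
            rw [lintegral_congr this, lintegral_zero, hbu, zero_mul, ENNReal.ofReal_zero]
          · have hbpos : 0 < N.b v u := lt_of_le_of_ne (N.b_nonneg v u) (Ne.symm hbu)
            have heq1 : (fun x : {p : V // p ≠ v} → ℝ => ENNReal.ofReal
                ((N.activeSet A Ahat (extFun v x) t).indicator (N.b v) u))
                = (extFun v ⁻¹' {θ : V → ℝ | u ∈ N.activeSet A Ahat θ t}).indicator
                  (fun _ => ENNReal.ofReal (N.b v u)) := by
              funext x
              by_cases hu : u ∈ N.activeSet A Ahat (extFun v x) t <;>
                simp [Set.indicator_apply, hu, Set.mem_preimage]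
            rw [heq1, lintegral_indicator_const (hBm u)]
            have hrest : restMeasure v (extFun v ⁻¹' {θ : V → ℝ | u ∈ N.activeSet A Ahat θ t})
                = ENNReal.ofReal (N.walkP A Ahat t u) := by
              rw [← measure_threshold_cylinder v _ (hBm u)]
              have hseteq : {θ : V → ℝ | (fun p : {p : V // p ≠ v} => θ p.1)
                  ∈ extFun v ⁻¹' {θ : V → ℝ | u ∈ N.activeSet A Ahat θ t}}
                  = {θ : V → ℝ | u ∈ N.activeSet A Ahat θ t} := by
                ext θ
                simp only [Set.mem_setOf_eq, Set.mem_preimage]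
                exact N.activeSet_determined A Ahat t u
                  (extFun v (fun p : {p : V // p ≠ v} => θ p.1)) θ (hagree u hbpos θ)
              rw [hseteq, ih u]
            rw [hrest, ← ENNReal.ofReal_mul (N.b_nonneg v u)]
        calc ∫⁻ x, ENNReal.ofReal (h x) ∂(restMeasure v)
            = ∫⁻ x, ∑ u, ENNReal.ofReal
              ((N.activeSet A Ahat (extFun v x) t).indicator (N.b v) u) ∂(restMeasure v) := by
              apply lintegral_congr
              intro x
              show ENNReal.ofReal (∑ u, (N.activeSet A Ahat (extFun v x) t).indicator (N.b v) u)
                = ∑ u, ENNReal.ofReal ((N.activeSet A Ahat (extFun v x) t).indicator (N.b v) u)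
              exact ENNReal.ofReal_sum_of_nonneg fun u _ =>
                Set.indicator_apply_nonneg fun _ => N.b_nonneg v u
          _ = ∑ u, ∫⁻ x, ENNReal.ofReal
              ((N.activeSet A Ahat (extFun v x) t).indicator (N.b v) u) ∂(restMeasure v) := by
              apply lintegral_finset_sum
              intro u _
              have hmt : Measurable fun a : {p : V // p ≠ v} → ℝ =>
                  (N.activeSet A Ahat (extFun v a) t).indicator (N.b v) u := by
                rw [hterm u]
                exact Measurable.indicator measurable_const (hBm u)
              exact hmt.ennreal_ofReal
          _ = ∑ u, ENNReal.ofReal (N.b v u * N.walkP A Ahat t u) := by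
              exact Finset.sum_congr rfl fun u _ => hint u
          _ = ENNReal.ofReal (∑ u, N.b v u * N.walkP A Ahat t u) := by
              rw [ENNReal.ofReal_sum_of_nonneg fun u _ =>
                mul_nonneg (N.b_nonneg v u) (N.walkP_nonneg A Ahat t u)]
          _ = ENNReal.ofReal (N.walkP A Ahat (t+1) v) := by
              rw [N.walkP_not_mem_hat hvh]


/-- the expected influence expressed through `walkP` -/
noncomputable def fP (N : InfoNetwork V) (T : ℕ) (A Ahat : Set V) : ℝ :=
  (1 / (T : ℝ)) * ∑ t ∈ Finset.Icc 1 T, ∑ v, N.walkP A Ahat t v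

lemma EX_eq_walkP (hacyc : N.Acyclic) {A Ahat : Set V}
    (hA : A ⊆ {x | x ≠ N.d}) (hAh : Ahat ⊆ {x | x ≠ N.d}) (t : ℕ) (v : V) :
    N.EX A Ahat t v = N.walkP A Ahat t v := by
  rw [EX, N.measure_activeSet_eq hacyc A Ahat hA hAh t v,
    ENNReal.toReal_ofReal (N.walkP_nonneg A Ahat t v)]

lemma sigmaBar_eq_fP (hacyc : N.Acyclic) {A Ahat : Set V} (T : ℕ)
    (hA : A ⊆ {x | x ≠ N.d}) (hAh : Ahat ⊆ {x | x ≠ N.d}) :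
    N.sigmaBar T A Ahat = N.fP T A Ahat := by
  rw [sigmaBar, fP]
  congr 1
  refine Finset.sum_congr rfl fun t _ => Finset.sum_congr rfl fun v _ => ?_
  exact N.EX_eq_walkP hacyc hA hAh t v

section fPlemmas

variable (T : ℕ)

lemma fP_nonneg (A Ahat : Set V) : 0 ≤ N.fP T A Ahat := by
  apply mul_nonneg
  · positivity
  · exact Finset.sum_nonneg fun t _ => Finset.sum_nonneg fun v _ => N.walkP_nonneg A Ahat t v

lemma fP_mono {A B Ahat Bhat : Set V} (hA : A ⊆ B) (hAh : Ahat ⊆ Bhat) :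
    N.fP T A Ahat ≤ N.fP T B Bhat := by
  apply mul_le_mul_of_nonneg_left _ (by positivity)
  exact Finset.sum_le_sum fun t _ => Finset.sum_le_sum fun v _ => N.walkP_mono hA hAh t v

lemma fP_submod_T {A B Ahat Bhat : Set V} (hA : A ⊆ B) (hAh : Ahat ⊆ Bhat) (w : V) :
    N.fP T (insert w B) Bhat - N.fP T B Bhat ≤ N.fP T (insert w A) Ahat - N.fP T A Ahat := by
  rw [fP, fP, fP, fP, ← mul_sub, ← mul_sub]
  apply mul_le_mul_of_nonneg_left _ (by positivity)
  rw [← Finset.sum_sub_distrib, ← Finset.sum_sub_distrib]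
  refine Finset.sum_le_sum fun t _ => ?_
  rw [← Finset.sum_sub_distrib, ← Finset.sum_sub_distrib]
  exact Finset.sum_le_sum fun v _ => N.walkP_submod_T hA hAh w t v

lemma fP_submod_P {A B Ahat Bhat : Set V} (hA : A ⊆ B) (hAh : Ahat ⊆ Bhat) (w : V) :
    N.fP T B (insert w Bhat) - N.fP T B Bhat ≤ N.fP T A (insert w Ahat) - N.fP T A Ahat := by
  rw [fP, fP, fP, fP, ← mul_sub, ← mul_sub]
  apply mul_le_mul_of_nonneg_left _ (by positivity)
  rw [← Finset.sum_sub_distrib, ← Finset.sum_sub_distrib]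
  refine Finset.sum_le_sum fun t _ => ?_
  rw [← Finset.sum_sub_distrib, ← Finset.sum_sub_distrib]
  exact Finset.sum_le_sum fun v _ => N.walkP_submod_P hA hAh w t v

lemma fP_dominance (A Ahat : Set V) (w : V) :
    N.fP T (insert w A) Ahat ≤ N.fP T A (insert w Ahat) := by
  apply mul_le_mul_of_nonneg_left _ (by positivity)
  exact Finset.sum_le_sum fun t _ => Finset.sum_le_sum fun v _ => N.walkP_dominance A Ahat w t v

lemma fP_irrel {Ahat : Set V} {w : V} (hw : w ∈ Ahat) (A : Set V) :
    N.fP T (insert w A) Ahat = N.fP T A Ahat := by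
  rw [fP, fP]
  congr 1
  exact Finset.sum_congr rfl fun t _ => Finset.sum_congr rfl fun v _ => N.walkP_irrel hw A t v

/-- telescoping for transient insertions -/
lemma fP_tele_T (S Sh : Set V) (D : Finset V) :
    N.fP T (S ∪ ↑D) Sh ≤ N.fP T S Sh + ∑ a ∈ D, (N.fP T (insert a S) Sh - N.fP T S Sh) := by
  induction D using Finset.induction_on with
  | empty => simp
  | insert a D hnotmem ih =>
    have hcoe : (↑(insert a D) : Set V) = insert a ↑D := by simp
    have hrw : S ∪ (↑(insert a D) : Set V) = insert a (S ∪ ↑D) := by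
      rw [hcoe, Set.union_insert]
    rw [hrw, Finset.sum_insert hnotmem]
    have h1 : N.fP T (insert a (S ∪ ↑D)) Sh - N.fP T (S ∪ ↑D) Sh
        ≤ N.fP T (insert a S) Sh - N.fP T S Sh :=
      N.fP_submod_T T Set.subset_union_left (le_refl Sh) a
    linarith

/-- telescoping for permanent insertions -/
lemma fP_tele_P (X S Sh : Set V) (hSX : S ⊆ X) (E : Finset V) :
    N.fP T X (Sh ∪ ↑E) ≤ N.fP T X Sh + ∑ b ∈ E, (N.fP T S (insert b Sh) - N.fP T S Sh) := by
  induction E using Finset.induction_on with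
  | empty => simp
  | insert b E hnotmem ih =>
    have hcoe : (↑(insert b E) : Set V) = insert b ↑E := by simp
    have hrw : Sh ∪ (↑(insert b E) : Set V) = insert b (Sh ∪ ↑E) := by
      rw [hcoe, Set.union_insert]
    rw [hrw, Finset.sum_insert hnotmem]
    have h1 : N.fP T X (insert b (Sh ∪ ↑E)) - N.fP T X (Sh ∪ ↑E)
        ≤ N.fP T S (insert b Sh) - N.fP T S Sh :=
      N.fP_submod_P T hSX Set.subset_union_left b
    linarith

end fPlemmas

end InfoNetwork

/- ======================  end auxiliary development  ====================== -/

/-- A real-valued set function `f` is submodular on the ground set `S`. -/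
def SubmodularOn {V : Type*} (S : Set V) (f : Set V → ℝ) : Prop :=
  ∀ A B : Set V, A ⊆ B → B ⊆ S → ∀ w ∈ S, w ∉ B →
    f (insert w B) - f B ≤ f (insert w A) - f A

/-- in an acyclic network, any run of the Standard Greedy Algorithm with
budgets `k` (transient) and `khat` (permanent) — starting from `(∅, ∅)`, at each step adding
one feasible node so as to maximize `σ̄` among all feasible single additions, and stopping
exactly when no feasible addition remains — produces a pair whose expected influence is at
least half the optimum over all disjoint feasible pairs. -/
theorem greedy_half_approximation {V : Type*} [Fintype V] (N : InfoNetwork V)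
    (hacyc : N.Acyclic) (T : ℕ) (hT : 1 ≤ T) (k khat : ℕ)
    (g : ℕ → Set V × Set V) (m : ℕ)
    (hm : m ≤ min (k + khat) (Fintype.card V - 1))
    (h0 : g 0 = (∅, ∅))
    -- each step adds one feasible node:
    (hstep : ∀ i < m, ∃ w : V, w ≠ N.d ∧ w ∉ (g i).1 ∪ (g i).2 ∧
      (((g i).1.ncard < k ∧ g (i + 1) = (insert w (g i).1, (g i).2)) ∨
       ((g i).2.ncard < khat ∧ g (i + 1) = ((g i).1, insert w (g i).2))))
    -- the added node maximizes `σ̄` among all feasible single additions: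
    (hgreedy : ∀ i < m, ∀ w' : V, w' ≠ N.d → w' ∉ (g i).1 ∪ (g i).2 →
      ((g i).1.ncard < k →
        N.sigmaBar T (insert w' (g i).1) (g i).2 ≤ N.sigmaBar T (g (i + 1)).1 (g (i + 1)).2) ∧
      ((g i).2.ncard < khat →
        N.sigmaBar T (g i).1 (insert w' (g i).2) ≤ N.sigmaBar T (g (i + 1)).1 (g (i + 1)).2))
    -- no feasible addition remains at the end:
    (hstop : ¬ ∃ w : V, w ≠ N.d ∧ w ∉ (g m).1 ∪ (g m).2 ∧
      ((g m).1.ncard < k ∨ (g m).2.ncard < khat)) :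
    ∀ A Ahat : Set V, A ⊆ {x : V | x ≠ N.d} → Ahat ⊆ {x : V | x ≠ N.d} →
      Disjoint A Ahat → A.ncard ≤ k → Ahat.ncard ≤ khat →
      N.sigmaBar T A Ahat ≤ 2 * N.sigmaBar T (g m).1 (g m).2 := by
  classical
  intro A Ahat hA hAhat hdisj hcA hcAh
  -- basic facts about the greedy trajectory
  have hstepfacts : ∀ i < m, (g i).1 ⊆ (g (i+1)).1 ∧ (g i).2 ⊆ (g (i+1)).2 := by
    intro i hi
    obtain ⟨w, hwd, hwm, hc⟩ := hstep i hi
    rcases hc with ⟨_, heq⟩ | ⟨_, heq⟩ <;> rw [heq]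
    · exact ⟨Set.subset_insert w _, subset_rfl⟩
    · exact ⟨subset_rfl, Set.subset_insert w _⟩
  have hinv : ∀ i, i ≤ m → ((g i).1 ⊆ {x | x ≠ N.d} ∧ (g i).2 ⊆ {x | x ≠ N.d})
      ∧ ((g i).1.ncard + (g i).2.ncard = i)
      ∧ (g i).1.ncard ≤ k ∧ (g i).2.ncard ≤ khat := by
    intro i
    induction i with
    | zero =>
      intro _
      rw [h0]
      refine ⟨⟨by simp, by simp⟩, by simp, by simp, by simp⟩
    | succ i ihp =>
      intro hi
      have him : i < m := Nat.lt_of_succ_le hi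
      obtain ⟨⟨hs1, hs2⟩, hcnt, hk1, hk2⟩ := ihp (Nat.le_of_lt him)
      obtain ⟨w, hwd, hwm, hc⟩ := hstep i him
      rcases hc with ⟨hroom, heq⟩ | ⟨hroom, heq⟩
      · have hwnot : w ∉ (g i).1 := fun h => hwm (Or.inl h)
        rw [heq]
        refine ⟨⟨?_, hs2⟩, ?_, ?_, hk2⟩
        · exact Set.insert_subset hwd hs1
        · show (insert w (g i).1).ncard + (g i).2.ncard = i + 1
          rw [Set.ncard_insert_of_notMem hwnot]
          omega
        · show (insert w (g i).1).ncard ≤ k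
          rw [Set.ncard_insert_of_notMem hwnot]
          omega
      · have hwnot : w ∉ (g i).2 := fun h => hwm (Or.inr h)
        rw [heq]
        refine ⟨⟨hs1, ?_⟩, ?_, hk1, ?_⟩
        · exact Set.insert_subset hwd hs2
        · show (g i).1.ncard + (insert w (g i).2).ncard = i + 1
          rw [Set.ncard_insert_of_notMem hwnot]
          omega
        · show (insert w (g i).2).ncard ≤ khat
          rw [Set.ncard_insert_of_notMem hwnot]
          omega
  have hmono : ∀ j, j ≤ m → ∀ i, i ≤ j → (g i).1 ⊆ (g j).1 ∧ (g i).2 ⊆ (g j).2 := by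
    intro j
    induction j with
    | zero =>
      intro _ i hi
      have : i = 0 := Nat.le_zero.1 hi
      subst this
      exact ⟨subset_rfl, subset_rfl⟩
    | succ j ihp =>
      intro hj i hi
      rcases Nat.lt_or_ge i (j+1) with hlt | hge
      · have h1 := ihp (le_trans (Nat.le_succ j) hj) i (Nat.lt_succ_iff.1 hlt)
        have h2 := hstepfacts j (Nat.lt_of_succ_le hj)
        exact ⟨h1.1.trans h2.1, h1.2.trans h2.2⟩
      · have : i = j + 1 := le_antisymm hi hge
        subst this
        exact ⟨subset_rfl, subset_rfl⟩
  have hgd : ∀ i, i ≤ m → (g i).1 ⊆ {x | x ≠ N.d} ∧ (g i).2 ⊆ {x | x ≠ N.d} :=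
    fun i hi => (hinv i hi).1
  have hF : ∀ i, i ≤ m → N.sigmaBar T (g i).1 (g i).2 = N.fP T (g i).1 (g i).2 := fun i hi =>
    N.sigmaBar_eq_fP hacyc T (hgd i hi).1 (hgd i hi).2
  -- greedy inequalities in `fP` form
  have hgreedyT : ∀ i, i < m → ∀ w' : V, w' ≠ N.d → w' ∉ (g i).1 ∪ (g i).2 →
      (g i).1.ncard < k →
      N.fP T (insert w' (g i).1) (g i).2 ≤ N.fP T (g (i+1)).1 (g (i+1)).2 := by
    intro i hi w' hd hm' hr
    have h1 := (hgreedy i hi w' hd hm').1 hr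
    rwa [N.sigmaBar_eq_fP hacyc T (Set.insert_subset hd (hgd i hi.le).1) (hgd i hi.le).2,
      hF (i+1) hi] at h1
  have hgreedyP : ∀ i, i < m → ∀ w' : V, w' ≠ N.d → w' ∉ (g i).1 ∪ (g i).2 →
      (g i).2.ncard < khat →
      N.fP T (g i).1 (insert w' (g i).2) ≤ N.fP T (g (i+1)).1 (g (i+1)).2 := by
    intro i hi w' hd hm' hr
    have h1 := (hgreedy i hi w' hd hm').2 hr
    rwa [N.sigmaBar_eq_fP hacyc T (hgd i hi.le).1 (Set.insert_subset hd (hgd i hi.le).2),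
      hF (i+1) hi] at h1
  have hdelta_nonneg : ∀ i, i < m →
      0 ≤ N.fP T (g (i+1)).1 (g (i+1)).2 - N.fP T (g i).1 (g i).2 :=
    fun i hi => sub_nonneg.2 (N.fP_mono T (hstepfacts i hi).1 (hstepfacts i hi).2)
  -- per-task bounds against greedy increments
  have hboundT : ∀ e : V, e ≠ N.d → e ∉ (g m).1 ∪ (g m).2 → ∀ i, i < m →
      N.fP T (insert e (g m).1) (g m).2 - N.fP T (g m).1 (g m).2
        ≤ N.fP T (g (i+1)).1 (g (i+1)).2 - N.fP T (g i).1 (g i).2 := by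
    intro e hed hem i hi
    have hmem : e ∉ (g i).1 ∪ (g i).2 := by
      rintro (h | h)
      · exact hem (Or.inl ((hmono m le_rfl i hi.le).1 h))
      · exact hem (Or.inr ((hmono m le_rfl i hi.le).2 h))
    by_cases hr : (g i).1.ncard < k
    · have h1 := N.fP_submod_T T (hmono m le_rfl i hi.le).1 (hmono m le_rfl i hi.le).2 e
      have h2 := hgreedyT i hi e hed hmem hr
      linarith
    · obtain ⟨w, _, _, hc⟩ := hstep i hi
      rcases hc with ⟨hroom, _⟩ | ⟨hroom, _⟩
      · exact absurd hroom hr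
      · have hdom := N.fP_dominance T (g m).1 (g m).2 e
        have h1 := N.fP_submod_P T (hmono m le_rfl i hi.le).1 (hmono m le_rfl i hi.le).2 e
        have h2 := hgreedyP i hi e hed hmem hroom
        linarith
  have hboundP : ∀ e : V, e ≠ N.d → e ∉ (g m).2 → ∀ i, i < m → e ∉ (g i).1 →
      (g i).2.ncard < khat →
      N.fP T (g m).1 (insert e (g m).2) - N.fP T (g m).1 (g m).2
        ≤ N.fP T (g (i+1)).1 (g (i+1)).2 - N.fP T (g i).1 (g i).2 := by
    intro e hed he2 i hi he1 hroom
    have hmem : e ∉ (g i).1 ∪ (g i).2 := by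
      rintro (h | h)
      · exact he1 h
      · exact he2 ((hmono m le_rfl i hi.le).2 h)
    have h1 := N.fP_submod_P T (hmono m le_rfl i hi.le).1 (hmono m le_rfl i hi.le).2 e
    have h2 := hgreedyP i hi e hed hmem hroom
    linarith
  -- the critical index for permanent room
  set jstar : ℕ := sInf ({i | i < m ∧ khat ≤ (g i).2.ncard} ∪ {m}) with hjdef
  have hjmem : jstar ∈ ({i | i < m ∧ khat ≤ (g i).2.ncard} ∪ {m} : Set ℕ) :=
    Nat.sInf_mem ⟨m, Or.inr rfl⟩
  have hjm : jstar ≤ m := by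
    rcases hjmem with h | h
    · exact le_of_lt h.1
    · exact le_of_eq h
  have hjroom : ∀ i, i < jstar → (g i).2.ncard < khat := by
    intro i hij
    have hnot : i ∉ ({i | i < m ∧ khat ≤ (g i).2.ncard} ∪ {m} : Set ℕ) :=
      Nat.notMem_of_lt_sInf hij
    have him : i < m := lt_of_lt_of_le hij hjm
    by_contra hcon
    exact hnot (Or.inl ⟨him, le_of_not_gt hcon⟩)
  have hkj : jstar < m → khat ≤ jstar := by
    intro hjlt
    rcases hjmem with h | h
    · calc khat ≤ (g jstar).2.ncard := h.2
        _ ≤ jstar := by have := (hinv jstar hjm).2.1; omega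
    · rw [Set.mem_singleton_iff] at h
      omega
  -- the task value function
  set c : V → ℕ := fun e =>
    if e ∈ Ahat \ (g m).2 then
      min jstar (if hb : ∃ i, e ∈ (g (i+1)).1 then Nat.find hb + 1 else m)
    else m with hcdef
  have hcle : ∀ e, c e ≤ m := by
    intro e
    simp only [hcdef]
    split
    · exact le_trans (min_le_left _ _) hjm
    · exact le_rfl
  -- the tasks
  set TK : Finset V := ((A \ ((g m).1 ∪ (g m).2)) ∪ (Ahat \ (g m).2)).toFinset with hTKdef
  have hTKcard : TK.card ≤ m := by
    have hdisj2 : Disjoint ((A \ ((g m).1 ∪ (g m).2)).toFinset) ((Ahat \ (g m).2)).toFinset := by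
      rw [Finset.disjoint_left]
      intro e he1 he2
      rw [Set.mem_toFinset] at he1 he2
      exact (Set.disjoint_left.1 hdisj) he1.1 he2.1
    have hTKu : TK = ((A \ ((g m).1 ∪ (g m).2)).toFinset) ∪ ((Ahat \ (g m).2)).toFinset := by
      rw [hTKdef, Set.toFinset_union]
    rw [hTKu, Finset.card_union_of_disjoint hdisj2]
    have hc1 : (A \ ((g m).1 ∪ (g m).2)).toFinset.card = (A \ ((g m).1 ∪ (g m).2)).ncard :=
      (Set.ncard_eq_toFinset_card' _).symm
    have hc2 : ((Ahat \ (g m).2)).toFinset.card = (Ahat \ (g m).2).ncard :=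
      (Set.ncard_eq_toFinset_card' _).symm
    rw [hc1, hc2]
    by_cases hcov : ∀ w : V, w ≠ N.d → w ∈ (g m).1 ∪ (g m).2
    · have hempty : A \ ((g m).1 ∪ (g m).2) = ∅ := by
        ext a
        simp only [Set.mem_diff, Set.mem_empty_iff_false, iff_false, not_and, not_not]
        intro ha
        exact hcov a (hA ha)
      rw [hempty, Set.ncard_empty]
      have hsub : Ahat \ (g m).2 ⊆ (g m).1 := by
        intro b hb
        rcases hcov b (hAhat hb.1) with h | h
        · exact h
        · exact absurd h hb.2
      calc 0 + (Ahat \ (g m).2).ncard ≤ (g m).1.ncard := by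
            rw [zero_add]; exact Set.ncard_le_ncard hsub (Set.toFinite _)
        _ ≤ m := by have := (hinv m le_rfl).2.1; omega
    · push_neg at hcov
      obtain ⟨w, hwd, hwm⟩ := hcov
      have hfull : ¬ ((g m).1.ncard < k ∨ (g m).2.ncard < khat) := by
        intro hor
        exact hstop ⟨w, hwd, hwm, hor⟩
      push_neg at hfull
      have hm2 := (hinv m le_rfl).2.1
      have hk1 := (hinv m le_rfl).2.2.1
      have hk2 := (hinv m le_rfl).2.2.2
      have h1 : (A \ ((g m).1 ∪ (g m).2)).ncard ≤ k :=
        le_trans (Set.ncard_le_ncard Set.diff_subset (Set.toFinite _)) hcA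
      have h2 : (Ahat \ (g m).2).ncard ≤ khat :=
        le_trans (Set.ncard_le_ncard Set.diff_subset (Set.toFinite _)) hcAh
      omega
  -- Hall's condition
  have hcount : ∀ r, (TK.filter (fun e => c e ≤ r)).card ≤ r ∨ m ≤ r := by
    intro r
    rcases Nat.lt_or_ge r m with hrm | hrm
    · left
      rcases Nat.lt_or_ge r jstar with hrj | hjr
      · -- every task with c e ≤ r is added before step r
        have hmapsto : ∀ e ∈ TK.filter (fun e => c e ≤ r),
            ∃ hb : ∃ i, e ∈ (g (i+1)).1, Nat.find hb < r := by
          intro e he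
          rw [Finset.mem_filter] at he
          obtain ⟨heTK, hec⟩ := he
          have hePT : e ∈ Ahat \ (g m).2 := by
            by_contra hcon
            simp only [hcdef, if_neg hcon] at hec
            omega
          simp only [hcdef, if_pos hePT] at hec
          rcases le_or_gt jstar r with h | h
          · omega
          · have hminr : (if hb : ∃ i, e ∈ (g (i+1)).1 then Nat.find hb + 1 else m) ≤ r := by
              rcases min_le_iff.1 hec with h1 | h1
              · omega
              · exact h1
            split at hminr
            · rename_i hb
              exact ⟨hb, by omega⟩
            · omega
        have hinj : ∀ e₁ ∈ TK.filter (fun e => c e ≤ r), ∀ e₂ ∈ TK.filter (fun e => c e ≤ r),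
            ∀ (hb₁ : ∃ i, e₁ ∈ (g (i+1)).1) (hb₂ : ∃ i, e₂ ∈ (g (i+1)).1),
            Nat.find hb₁ = Nat.find hb₂ → Nat.find hb₁ < r → Nat.find hb₂ < r → e₁ = e₂ := by
          intro e₁ _ e₂ _ hb₁ hb₂ heq h₁ h₂
          have hlt : Nat.find hb₁ < m := lt_of_lt_of_le h₁ hrm.le
          have hnot₁ : e₁ ∉ (g (Nat.find hb₁)).1 := by
            rcases Nat.eq_zero_or_pos (Nat.find hb₁) with h | h
            · rw [h, h0]; simp
            · intro hc2
              have hp : e₁ ∈ (g ((Nat.find hb₁ - 1) + 1)).1 := by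
                rwa [Nat.sub_add_cancel h]
              exact Nat.find_min hb₁ (Nat.pred_lt (Nat.pos_iff_ne_zero.mp h)) hp
          have hnot₂ : e₂ ∉ (g (Nat.find hb₂)).1 := by
            rcases Nat.eq_zero_or_pos (Nat.find hb₂) with h | h
            · rw [h, h0]; simp
            · intro hc2
              have hp : e₂ ∈ (g ((Nat.find hb₂ - 1) + 1)).1 := by
                rwa [Nat.sub_add_cancel h]
              exact Nat.find_min hb₂ (Nat.pred_lt (Nat.pos_iff_ne_zero.mp h)) hp
          obtain ⟨w, _, hwm, hc2⟩ := hstep (Nat.find hb₁) hlt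
          have hin₁ : e₁ ∈ (g (Nat.find hb₁ + 1)).1 := Nat.find_spec hb₁
          have hin₂ : e₂ ∈ (g (Nat.find hb₂ + 1)).1 := Nat.find_spec hb₂
          rw [← heq] at hin₂ hnot₂
          rcases hc2 with ⟨_, heq2⟩ | ⟨_, heq2⟩
          · rw [heq2] at hin₁ hin₂
            simp only [Set.mem_insert_iff] at hin₁ hin₂
            rcases hin₁ with rfl | h1
            · rcases hin₂ with rfl | h2
              · rfl
              · exact absurd h2 hnot₂
            · exact absurd h1 hnot₁
          · rw [heq2] at hin₁
            exact absurd hin₁ hnot₁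
        -- injection into range r
        classical
        have : (TK.filter (fun e => c e ≤ r)).card ≤ (Finset.range r).card := by
          apply Finset.card_le_card_of_injOn
            (fun e => if hb : ∃ i, e ∈ (g (i+1)).1 then Nat.find hb else 0)
          · intro e he
            obtain ⟨hb, hlt⟩ := hmapsto e he
            simp only [dif_pos hb, Finset.mem_coe, Finset.mem_range]
            exact hlt
          · intro e₁ he₁ e₂ he₂ heq
            obtain ⟨hb₁, h₁⟩ := hmapsto e₁ he₁
            obtain ⟨hb₂, h₂⟩ := hmapsto e₂ he₂
            simp only [dif_pos hb₁, dif_pos hb₂] at heq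
            exact hinj e₁ he₁ e₂ he₂ hb₁ hb₂ heq h₁ h₂
        rwa [Finset.card_range] at this
      · -- jstar ≤ r < m : all tasks in the filter are permanent tasks
        have hjlt : jstar < m := lt_of_le_of_lt hjr hrm
        have hsub : TK.filter (fun e => c e ≤ r) ⊆ (Ahat \ (g m).2).toFinset := by
          intro e he
          rw [Finset.mem_filter] at he
          obtain ⟨_, hec⟩ := he
          rw [Set.mem_toFinset]
          by_contra hcon
          simp only [hcdef, if_neg hcon] at hec
          omega
        calc (TK.filter (fun e => c e ≤ r)).card ≤ (Ahat \ (g m).2).toFinset.card :=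
              Finset.card_le_card hsub
          _ = (Ahat \ (g m).2).ncard := (Set.ncard_eq_toFinset_card' _).symm
          _ ≤ Ahat.ncard := Set.ncard_le_ncard Set.diff_subset (Set.toFinite _)
          _ ≤ khat := hcAh
          _ ≤ jstar := hkj hjlt
          _ ≤ r := hjr
    · right; exact hrm
  have hallcond : ∀ s : Finset {x // x ∈ TK},
      s.card ≤ (s.biUnion (fun e => Finset.range (c e.1))).card := by
    intro s
    rcases s.eq_empty_or_nonempty with rfl | hne
    · simp
    · set M := s.sup' hne (fun e => c e.1) with hMdef
      have hMmem : ∃ e ∈ s, c e.1 = M := by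
        obtain ⟨e, hes, hee⟩ := Finset.exists_mem_eq_sup' hne (fun e => c e.1)
        exact ⟨e, hes, hee.symm⟩
      have hsub : Finset.range M ⊆ s.biUnion (fun e => Finset.range (c e.1)) := by
        obtain ⟨e, hes, hee⟩ := hMmem
        intro x hx
        rw [Finset.mem_biUnion]
        exact ⟨e, hes, by rwa [hee]⟩
      have hcard1 : s.card ≤ M := by
        have hmapsto : ∀ e ∈ s, e.1 ∈ TK.filter (fun x => c x ≤ M) := by
          intro e hes
          rw [Finset.mem_filter]
          exact ⟨e.2, Finset.le_sup' (fun x => c x.1) hes⟩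
        have hinj : Set.InjOn (fun e : {x // x ∈ TK} => e.1) ↑s :=
          fun a _ b _ h => Subtype.ext h
        have h1 : s.card ≤ (TK.filter (fun x => c x ≤ M)).card :=
          Finset.card_le_card_of_injOn _ hmapsto hinj
        rcases hcount M with h | h
        · exact le_trans h1 h
        · calc s.card ≤ (TK.filter (fun x => c x ≤ M)).card := h1
            _ ≤ TK.card := Finset.card_le_card (Finset.filter_subset _ _)
            _ ≤ m := hTKcard
            _ ≤ M := h
      calc s.card ≤ M := hcard1
        _ = (Finset.range M).card := (Finset.card_range M).symm
        _ ≤ _ := Finset.card_le_card hsub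
  obtain ⟨φ, hφinj, hφmem⟩ := (Finset.all_card_le_biUnion_card_iff_exists_injective
    (fun e : {x // x ∈ TK} => Finset.range (c e.1))).1 hallcond
  -- the marginal value of each task
  set DV : V → ℝ := fun e =>
    if e ∈ Ahat \ (g m).2 then
      N.fP T (g m).1 (insert e (g m).2) - N.fP T (g m).1 (g m).2
    else
      N.fP T (insert e (g m).1) (g m).2 - N.fP T (g m).1 (g m).2 with hDVdef
  have htaskbound : ∀ e : {x // x ∈ TK},
      DV e.1 ≤ N.fP T (g (φ e + 1)).1 (g (φ e + 1)).2 - N.fP T (g (φ e)).1 (g (φ e)).2 := by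
    intro e
    have hmem := hφmem e
    rw [Finset.mem_range] at hmem
    have hilt : φ e < m := lt_of_lt_of_le hmem (hcle e.1)
    have heTK := e.2
    simp only [hTKdef, Set.mem_toFinset] at heTK
    by_cases hePT : e.1 ∈ Ahat \ (g m).2
    · -- permanent task
      have hed : e.1 ≠ N.d := hAhat hePT.1
      have hjlt : φ e < jstar := by
        simp only [hcdef, if_pos hePT] at hmem
        exact lt_of_lt_of_le hmem (min_le_left _ _)
      have hroom : (g (φ e)).2.ncard < khat := hjroom _ hjlt
      have hnot1 : e.1 ∉ (g (φ e)).1 := by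
        intro hc2
        have hpos : 0 < φ e := by
          rcases Nat.eq_zero_or_pos (φ e) with h | h
          · rw [h, h0] at hc2
            exact absurd hc2 (Set.notMem_empty _)
          · exact h
        have hfind : ∃ i, e.1 ∈ (g (i+1)).1 :=
          ⟨φ e - 1, by rwa [Nat.sub_add_cancel hpos]⟩
        have hle2 : Nat.find hfind + 1 ≤ φ e := by
          have h1 : Nat.find hfind ≤ φ e - 1 :=
            Nat.find_min' hfind (by rwa [Nat.sub_add_cancel hpos])
          omega
        simp only [hcdef, if_pos hePT, dif_pos hfind] at hmem
        have h2 : φ e < Nat.find hfind + 1 := lt_of_lt_of_le hmem (min_le_right _ _)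
        omega
      have hb := hboundP e.1 hed hePT.2 (φ e) hilt hnot1 hroom
      simp only [hDVdef, if_pos hePT]
      exact hb
    · -- transient task
      have heA : e.1 ∈ A \ ((g m).1 ∪ (g m).2) := by
        rcases heTK with h | h
        · exact h
        · exact absurd h hePT
      have hed : e.1 ≠ N.d := hA heA.1
      have hb := hboundT e.1 hed heA.2 (φ e) hilt
      simp only [hDVdef, if_neg hePT]
      exact hb
  -- summation over tasks is bounded by the total greedy gain
  have hsum1 : ∑ e ∈ TK, DV e ≤ N.fP T (g m).1 (g m).2 := by
    set F : ℕ → ℝ :=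
      fun i => N.fP T (g (i + 1)).1 (g (i + 1)).2 - N.fP T (g i).1 (g i).2 with hFdef
    have h1 : ∑ e ∈ TK, DV e = ∑ e ∈ TK.attach, DV e.1 := (Finset.sum_attach _ _).symm
    have h2 : ∑ e ∈ TK.attach, DV e.1 ≤ ∑ e ∈ TK.attach, F (φ e) :=
      Finset.sum_le_sum fun e _ => htaskbound e
    have h3 : ∑ i ∈ TK.attach.image φ, F i = ∑ e ∈ TK.attach, F (φ e) :=
      Finset.sum_image (fun a _ b _ h => hφinj h)
    have h4 : TK.attach.image φ ⊆ Finset.range m := by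
      intro i hi
      rw [Finset.mem_image] at hi
      obtain ⟨e, _, rfl⟩ := hi
      have h5 := hφmem e
      rw [Finset.mem_range] at h5 ⊢
      exact lt_of_lt_of_le h5 (hcle e.1)
    have h5 : ∑ i ∈ TK.attach.image φ, F i ≤ ∑ i ∈ Finset.range m, F i :=
      Finset.sum_le_sum_of_subset_of_nonneg h4
        (fun i hi _ => hdelta_nonneg i (Finset.mem_range.1 hi))
    have h6 : ∑ i ∈ Finset.range m, F i
        = N.fP T (g m).1 (g m).2 - N.fP T (g 0).1 (g 0).2 :=
      Finset.sum_range_sub (fun i => N.fP T (g i).1 (g i).2) m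
    have h7 : 0 ≤ N.fP T (g 0).1 (g 0).2 := N.fP_nonneg T _ _
    rw [h1]
    rw [← h3] at h2
    linarith
  -- telescoping chain
  have hAS : A ∪ (g m).1 = (g m).1 ∪ ↑((A \ (g m).1).toFinset) := by
    rw [Set.coe_toFinset, Set.union_diff_self, Set.union_comm]
  have hAhS : Ahat ∪ (g m).2 = (g m).2 ∪ ↑((Ahat \ (g m).2).toFinset) := by
    rw [Set.coe_toFinset, Set.union_diff_self, Set.union_comm]
  have hchain1 : N.fP T A Ahat ≤ N.fP T (A ∪ (g m).1) (Ahat ∪ (g m).2) :=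
    N.fP_mono T Set.subset_union_left Set.subset_union_left
  have hchain2 : N.fP T (A ∪ (g m).1) (Ahat ∪ (g m).2)
      ≤ N.fP T (A ∪ (g m).1) (g m).2 + ∑ b ∈ (Ahat \ (g m).2).toFinset,
          (N.fP T (g m).1 (insert b (g m).2) - N.fP T (g m).1 (g m).2) := by
    have h := N.fP_tele_P T (A ∪ (g m).1) (g m).1 (g m).2 Set.subset_union_right
      ((Ahat \ (g m).2).toFinset)
    rwa [← hAhS] at h
  have hchain3 : N.fP T (A ∪ (g m).1) (g m).2
      ≤ N.fP T (g m).1 (g m).2 + ∑ a ∈ (A \ (g m).1).toFinset,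
          (N.fP T (insert a (g m).1) (g m).2 - N.fP T (g m).1 (g m).2) := by
    have h := N.fP_tele_T T (g m).1 (g m).2 ((A \ (g m).1).toFinset)
    rwa [← hAS] at h
  -- transient marginals of elements already permanent vanish
  have hsplitT : ∑ a ∈ (A \ ((g m).1 ∪ (g m).2)).toFinset,
        (N.fP T (insert a (g m).1) (g m).2 - N.fP T (g m).1 (g m).2)
      = ∑ a ∈ (A \ (g m).1).toFinset,
        (N.fP T (insert a (g m).1) (g m).2 - N.fP T (g m).1 (g m).2) := by
    apply Finset.sum_subset
    · intro a ha
      rw [Set.mem_toFinset] at ha ⊢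
      exact ⟨ha.1, fun hc => ha.2 (Or.inl hc)⟩
    · intro a ha hnot
      rw [Set.mem_toFinset] at ha hnot
      have ha2 : a ∈ (g m).2 := by
        by_contra hcon
        exact hnot ⟨ha.1, fun hc => (by rcases hc with h | h; exact ha.2 h; exact hcon h)⟩
      rw [N.fP_irrel T ha2 (g m).1, sub_self]
  have hTKuf : TK = ((A \ ((g m).1 ∪ (g m).2)).toFinset) ∪ ((Ahat \ (g m).2)).toFinset := by
    rw [hTKdef, Set.toFinset_union]
  have hdisj3 : Disjoint ((A \ ((g m).1 ∪ (g m).2)).toFinset) ((Ahat \ (g m).2)).toFinset := by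
    rw [Finset.disjoint_left]
    intro e he1 he2
    rw [Set.mem_toFinset] at he1 he2
    exact (Set.disjoint_left.1 hdisj) he1.1 he2.1
  have hsumTK : ∑ e ∈ TK, DV e
      = ∑ a ∈ (A \ ((g m).1 ∪ (g m).2)).toFinset,
          (N.fP T (insert a (g m).1) (g m).2 - N.fP T (g m).1 (g m).2)
        + ∑ b ∈ (Ahat \ (g m).2).toFinset,
          (N.fP T (g m).1 (insert b (g m).2) - N.fP T (g m).1 (g m).2) := by
    rw [hTKuf, Finset.sum_union hdisj3]
    congr 1
    · apply Finset.sum_congr rfl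
      intro a ha
      rw [Set.mem_toFinset] at ha
      have hnot : a ∉ Ahat \ (g m).2 := fun hc => (Set.disjoint_left.1 hdisj) ha.1 hc.1
      simp only [hDVdef, if_neg hnot]
    · apply Finset.sum_congr rfl
      intro b hb
      rw [Set.mem_toFinset] at hb
      simp only [hDVdef, if_pos hb]
  have hfinal : N.fP T A Ahat ≤ 2 * N.fP T (g m).1 (g m).2 := by
    linarith
  rw [N.sigmaBar_eq_fP hacyc T hA hAhat, hF m le_rfl]
  exact hfinal
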